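/- Let H be an infinite-dimensional separable Hilbert space with orthonormal basis (e_n)_{n≥0}, T1 the unilateral shift (T1 e_n = e_{n+1}) and T2 the Bergman shift (T2 e_n = sqrt(n/(n+1)) e_{n+1}). If X is a bounded operator on H satisfying T1 X = X T2, then for all n ≥ 1, ⟨X e_n, e_n⟩ = sqrt(n+1) · ⟨X e_0, e_0⟩. -/
import Mathlib
open scoped InnerProductSpace

lemma shift_inner_key
    {H : Type*} [NormedAddCommGroup H] [InnerProductSpace ℂ H] [CompleteSpace H]
    (e : HilbertBasis ℕ ℂ H) (T1 : H →L[ℂ] H)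
    (hT1 : ∀ n : ℕ, T1 (e n) = e (n + 1)) (v : H) (n : ℕ) :
    ⟪T1 v, e (n + 1)⟫_ℂ = ⟪v, e n⟫_ℂ := by
  have hortho := orthonormal_iff_ite.mp e.orthonormal
  have h0 : HasSum (fun i => e.repr v i • e (i + 1)) (T1 v) := by
    have := (e.hasSum_repr v).mapL T1
    simpa [hT1] using this
  have h1 : HasSum (fun i => ⟪e (n + 1), e.repr v i • e (i + 1)⟫_ℂ) ⟪e (n + 1), T1 v⟫_ℂ :=
    (innerSL ℂ (e (n + 1))).hasSum h0
  have h2 : HasSum (fun i => if i = n then e.repr v n else 0) ⟪e (n + 1), T1 v⟫_ℂ := by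
    refine h1.congr_fun fun i => ?_
    rw [inner_smul_right, hortho]
    by_cases h : i = n
    · simp [h]
    · simp [h, Ne.symm h]
  have h3 : ⟪e (n + 1), T1 v⟫_ℂ = e.repr v n := h2.unique (hasSum_ite_eq n _)
  calc ⟪T1 v, e (n + 1)⟫_ℂ = (starRingEnd ℂ) ⟪e (n + 1), T1 v⟫_ℂ := (inner_conj_symm _ _).symm
    _ = (starRingEnd ℂ) ⟪e n, v⟫_ℂ := by rw [h3, e.repr_apply_apply]
    _ = ⟪v, e n⟫_ℂ := inner_conj_symm _ _

/-- If `X` intertwines the unilateral shift `T1` and the Bergman shift `T2`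
(`T1 X = X T2`), then `⟨X e_n, e_n⟩ = √(n+1) ⟨X e_0, e_0⟩` for all `n ≥ 1`. -/
theorem intertwiner_diagonal_entries
    {H : Type*} [NormedAddCommGroup H] [InnerProductSpace ℂ H] [CompleteSpace H]
    (e : HilbertBasis ℕ ℂ H) (T1 T2 X : H →L[ℂ] H)
    (hT1 : ∀ n : ℕ, T1 (e n) = e (n + 1))
    (hT2 : ∀ n : ℕ, T2 (e n) = (Real.sqrt (n / (n + 1)) : ℂ) • e (n + 1))
    (hX : T1 ∘L X = X ∘L T2) :
    ∀ n : ℕ, 1 ≤ n →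
      ⟪X (e n), e n⟫_ℂ = (Real.sqrt (n + 1) : ℂ) * ⟪X (e 0), e 0⟫_ℂ := by
  set a : ℕ → ℂ := fun n => ⟪X (e n), e n⟫_ℂ with ha
  have hrec : ∀ n : ℕ, a n = (Real.sqrt (n / (n + 1)) : ℂ) * a (n + 1) := by
    intro n
    have h : T1 (X (e n)) = X (T2 (e n)) := by
      have := congrArg (fun T => T (e n)) hX
      simpa using this
    rw [hT2, map_smul] at h
    have h3 := shift_inner_key e T1 hT1 (X (e n)) n
    rw [h, inner_smul_left, Complex.conj_ofReal] at h3
    exact h3.symm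
  have ha0 : a 0 = 0 := by
    have := hrec 0
    simpa using this
  have ha1 : ∀ n : ℕ, 1 ≤ n → a n = (Real.sqrt n : ℂ) * a 1 := by
    intro n hn
    induction n with
    | zero => omega
    | succ k ih =>
      rcases Nat.lt_or_ge k 1 with hk | hk
      · interval_cases k
        simp
      · have ihk := ih hk
        have hkpos : (0:ℝ) < k := by positivity
        have hc : Real.sqrt ((k:ℝ) / (k + 1)) ≠ 0 := by
          refine Real.sqrt_ne_zero'.mpr ?_
          positivity
        have hcC : (Real.sqrt ((k:ℝ) / (k + 1)) : ℂ) ≠ 0 := by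
          exact_mod_cast Complex.ofReal_ne_zero.mpr hc
        have hsq : Real.sqrt ((k:ℝ) / (k + 1)) * Real.sqrt ((k:ℝ) + 1) = Real.sqrt k := by
          rw [← Real.sqrt_mul (by positivity)]
          congr 1
          field_simp
        have h1 : (Real.sqrt ((k:ℝ) / (k + 1)) : ℂ) * a (k + 1)
            = (Real.sqrt ((k:ℝ) / (k + 1)) : ℂ) * ((Real.sqrt ((k:ℝ) + 1) : ℂ) * a 1) := by
          rw [← hrec k, ihk, ← mul_assoc, ← Complex.ofReal_mul, hsq]
        have h2 := mul_left_cancel₀ hcC h1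
        rw [h2]
        norm_num
  have hbound : ∀ n : ℕ, ‖a n‖ ≤ ‖X‖ := by
    intro n
    have he : ‖e n‖ = 1 := e.orthonormal.1 n
    calc ‖a n‖ ≤ ‖X (e n)‖ * ‖e n‖ := norm_inner_le_norm _ _
      _ ≤ (‖X‖ * ‖e n‖) * ‖e n‖ := by gcongr; exact X.le_opNorm _
      _ = ‖X‖ := by rw [he]; ring
  have ha1z : a 1 = 0 := by
    by_contra h
    have hpos : 0 < ‖a 1‖ := norm_pos_iff.mpr h
    obtain ⟨n, hn⟩ := exists_nat_gt ((‖X‖ / ‖a 1‖) ^ 2)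
    have hb := hbound (n + 1)
    rw [ha1 (n + 1) (by omega)] at hb
    rw [norm_mul, Complex.norm_real, Real.norm_eq_abs,
      abs_of_nonneg (Real.sqrt_nonneg _)] at hb
    have h1 : Real.sqrt ((n:ℝ) + 1) ≤ ‖X‖ / ‖a 1‖ := by
      rw [le_div_iff₀ hpos]
      exact_mod_cast hb
    have h2 : ((n:ℝ) + 1) ≤ (‖X‖ / ‖a 1‖) ^ 2 := by
      have := pow_le_pow_left₀ (Real.sqrt_nonneg _) h1 2
      rwa [Real.sq_sqrt (by positivity)] at this
    linarith
  intro n hn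
  rw [show ⟪X (e n), e n⟫_ℂ = a n from rfl, show ⟪X (e 0), e 0⟫_ℂ = a 0 from rfl,
    ha1 n hn, ha1z, ha0]
  ring
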